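/- Let n and M be positive integers and let Q be an n \times n matrix with natural number entries such that every row of Q sums to M. Then the polynomial \det(M I - X Q) \in \mathbb{Z}[X] (the determinant of the n \times n matrix over \mathbb{Z}[X] whose (i,j) entry is M \delta_{ij} - Q_{ij} X) can be written as \sum_{k=0}^{n} a_k X^k with |a_k| \leq \binom{n}{k} M^n for all k \in \{0,\dots,n\}. -/

import Mathlib

open Polynomial Finset Matrix

lemma coeff_prod_linear {ι : Type*} [DecidableEq ι] (s : Finset ι) (a b : ι → ℤ) (k : ℕ) :
    (∏ i ∈ s, (C (a i) + C (b i) * X)).coeff k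
      = ∑ t ∈ s.powersetCard k, ((∏ i ∈ t, b i) * ∏ i ∈ s \ t, a i) := by
  induction s using Finset.induction generalizing k with
  | empty =>
    cases k with
    | zero => simp
    | succ k =>
      rw [show Finset.powersetCard (k+1) (∅:Finset ι) = ∅ from
        Finset.powersetCard_eq_empty.2 (by simp)]
      simp [Polynomial.coeff_one]
  | insert x s hx ih =>
    rw [Finset.prod_insert hx]
    cases k with
    | zero =>
      rw [mul_coeff_zero, ih 0]
      simp [Finset.prod_insert, hx, mul_comm]
    | succ k =>
      have expand : (C (a x) + C (b x) * X) * (∏ i ∈ s, (C (a i) + C (b i) * X))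
          = C (a x) * (∏ i ∈ s, (C (a i) + C (b i) * X))
            + C (b x) * (X * (∏ i ∈ s, (C (a i) + C (b i) * X))) := by ring
      rw [expand, coeff_add, coeff_C_mul, coeff_C_mul, coeff_X_mul, ih, ih,
        powersetCard_succ_insert hx]
      have hdisj : Disjoint (s.powersetCard (k+1)) ((s.powersetCard k).image (insert x)) := by
        rw [Finset.disjoint_left]
        rintro t ht hti
        rw [mem_powersetCard] at ht
        obtain ⟨u, hu, rfl⟩ := Finset.mem_image.1 hti
        rw [mem_powersetCard] at hu
        exact hx (ht.1 (Finset.mem_insert_self x u))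
      rw [Finset.sum_union hdisj]
      congr 1
      · rw [Finset.mul_sum]
        refine Finset.sum_congr rfl fun t ht => ?_
        rw [mem_powersetCard] at ht
        have hxt : x ∉ t := fun h => hx (ht.1 h)
        have : insert x s \ t = insert x (s \ t) := by
          ext y; simp only [Finset.mem_sdiff, Finset.mem_insert]
          constructor
          · rintro ⟨h1 | h1, h2⟩
            · exact Or.inl h1
            · exact Or.inr ⟨h1, h2⟩
          · rintro (rfl | ⟨h1, h2⟩)
            · exact ⟨Or.inl rfl, hxt⟩
            · exact ⟨Or.inr h1, h2⟩
        rw [this, Finset.prod_insert (fun h => hx (Finset.mem_sdiff.1 h).1)]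
        ring
      · rw [Finset.sum_image, Finset.mul_sum]
        · refine Finset.sum_congr rfl fun t ht => ?_
          rw [mem_powersetCard] at ht
          have hxt : x ∉ t := fun h => hx (ht.1 h)
          have h1 : insert x s \ insert x t = s \ t := by
            ext y; simp only [Finset.mem_sdiff, Finset.mem_insert, not_or]
            constructor
            · rintro ⟨h1 | h1, h2, h3⟩
              · exact absurd h1 h2
              · exact ⟨h1, h3⟩
            · rintro ⟨h1, h2⟩
              exact ⟨Or.inr h1, fun h => hx (h ▸ h1), h2⟩
          rw [h1, Finset.prod_insert hxt]
          ring
        · intro t ht u hu h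
          rw [Finset.mem_coe, mem_powersetCard] at ht hu
          have hxt : x ∉ t := fun hh => hx (ht.1 hh)
          have hxu : x ∉ u := fun hh => hx (hu.1 hh)
          rwa [Finset.insert_erase_invOn.2.injOn.eq_iff
            (by simp [hxt]) (by simp [hxu])] at h

lemma key_perm_sum (n M : ℕ) (Q : Matrix (Fin n) (Fin n) ℕ) (hQ : ∀ i, ∑ j, Q i j = M)
    (t : Finset (Fin n)) :
    ∑ σ : Equiv.Perm (Fin n),
        (∏ i ∈ t, (Q i (σ i) : ℤ)) * ∏ i ∈ univ \ t, (if i = σ i then (M:ℤ) else 0)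
      ≤ (M:ℤ) ^ n := by
  classical
  set c := (univ \ t).card with hc
  have hsplit : ∀ σ : Equiv.Perm (Fin n),
      (∏ i ∈ univ \ t, (if i = σ i then (M:ℤ) else 0))
        = if (∀ i ∈ univ \ t, σ i = i) then (M:ℤ)^c else 0 := by
    intro σ
    by_cases h : ∀ i ∈ univ \ t, σ i = i
    · rw [if_pos h, ← Finset.prod_const]
      exact Finset.prod_congr rfl fun i hi => by rw [if_pos (h i hi).symm]
    · rw [if_neg h]
      push_neg at h
      obtain ⟨i, hi, hne⟩ := h
      exact Finset.prod_eq_zero hi (by rw [if_neg (fun hh => hne hh.symm)])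
  calc ∑ σ : Equiv.Perm (Fin n),
        (∏ i ∈ t, (Q i (σ i) : ℤ)) * ∏ i ∈ univ \ t, (if i = σ i then (M:ℤ) else 0)
      = ∑ σ ∈ univ.filter (fun σ : Equiv.Perm (Fin n) => ∀ i ∈ univ \ t, σ i = i),
          (∏ i ∈ t, (Q i (σ i) : ℤ)) * (M:ℤ)^c := by
        rw [Finset.sum_filter]
        refine Finset.sum_congr rfl fun σ _ => ?_
        rw [hsplit σ]
        split_ifs <;> ring
    _ ≤ (M:ℤ)^(t.card) * (M:ℤ)^c := by
        rw [← Finset.sum_mul]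
        have hMc : (0:ℤ) ≤ (M:ℤ)^c := by positivity
        refine mul_le_mul_of_nonneg_right ?_ hMc
        -- map each such σ to a function ↥t → ↥t
        set Φ : Equiv.Perm (Fin n) → (↥t → ↥t) := fun σ i =>
          if h : σ i ∈ t then ⟨σ i, h⟩ else i with hΦ
        have hmem : ∀ σ ∈ univ.filter (fun σ : Equiv.Perm (Fin n) => ∀ i ∈ univ \ t, σ i = i),
            ∀ i : Fin n, i ∈ t → σ i ∈ t := by
          intro σ hσ i hi
          rw [Finset.mem_filter] at hσ
          by_contra hns
          have h1 : σ (σ i) = σ i := hσ.2 (σ i) (Finset.mem_sdiff.2 ⟨Finset.mem_univ _, hns⟩)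
          exact hns (by rw [σ.injective h1]; exact hi)
        have hval : ∀ σ ∈ univ.filter (fun σ : Equiv.Perm (Fin n) => ∀ i ∈ univ \ t, σ i = i),
            (∏ i ∈ t, (Q i (σ i) : ℤ)) = ∏ i : ↥t, (Q i (Φ σ i) : ℤ) := by
          intro σ hσ
          rw [← Finset.prod_coe_sort t (fun i => (Q i (σ i) : ℤ))]
          refine Finset.prod_congr rfl fun i _ => ?_
          rw [hΦ]
          simp only []
          rw [dif_pos (hmem σ hσ i i.2)]
        have hinj : Set.InjOn Φ
            (univ.filter (fun σ : Equiv.Perm (Fin n) => ∀ i ∈ univ \ t, σ i = i)) := by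
          intro σ hσ σ' hσ' h
          rw [Finset.coe_filter] at hσ hσ'
          refine Equiv.ext fun i => ?_
          by_cases hi : i ∈ t
          · have := congrFun h ⟨i, hi⟩
            rw [hΦ] at this
            simp only [] at this
            rw [dif_pos (hmem σ (by simpa using hσ) i hi),
              dif_pos (hmem σ' (by simpa using hσ') i hi)] at this
            exact Subtype.mk_eq_mk.mp this
          · rw [hσ.2 i (Finset.mem_sdiff.2 ⟨Finset.mem_univ _, hi⟩),
              hσ'.2 i (Finset.mem_sdiff.2 ⟨Finset.mem_univ _, hi⟩)]
        calc ∑ σ ∈ univ.filter (fun σ : Equiv.Perm (Fin n) => ∀ i ∈ univ \ t, σ i = i),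
              (∏ i ∈ t, (Q i (σ i) : ℤ))
            = ∑ f ∈ (univ.filter (fun σ : Equiv.Perm (Fin n) => ∀ i ∈ univ \ t, σ i = i)).image Φ,
              ∏ i : ↥t, (Q i (f i) : ℤ) := by
              rw [Finset.sum_image (fun x hx y hy h => hinj hx hy h)]
              exact Finset.sum_congr rfl hval
          _ ≤ ∑ f : ↥t → ↥t, ∏ i : ↥t, (Q i (f i) : ℤ) := by
              refine Finset.sum_le_sum_of_subset_of_nonneg (Finset.subset_univ _)
                (fun f _ _ => Finset.prod_nonneg fun i _ => by positivity)
          _ = ∏ i : ↥t, ∑ j : ↥t, (Q i j : ℤ) := by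
              rw [← Fintype.piFinset_univ]
              exact (Finset.prod_univ_sum (fun _ : ↥t => (univ : Finset ↥t))
                (fun i j => (Q ↑i ↑j : ℤ))).symm
          _ ≤ ∏ i : ↥t, (M:ℤ) := by
              refine Finset.prod_le_prod (fun i _ => Finset.sum_nonneg fun j _ => by positivity)
                (fun i _ => ?_)
              calc ∑ j : ↥t, (Q i j : ℤ) = ∑ j ∈ t, (Q i j : ℤ) :=
                    Finset.sum_coe_sort t (fun j => (Q i j : ℤ))
                _ ≤ ∑ j : Fin n, (Q i j : ℤ) :=
                    Finset.sum_le_sum_of_subset_of_nonneg (Finset.subset_univ _)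
                      (fun j _ _ => by positivity)
                _ = (M:ℤ) := by rw [← Nat.cast_sum, hQ i]
          _ = (M:ℤ)^(t.card) := by rw [Finset.prod_const, Finset.card_univ, Fintype.card_coe]
    _ = (M:ℤ)^n := by
        rw [← pow_add]
        congr 1
        have ht : t.card ≤ n := by simpa using Finset.card_le_univ t
        rw [hc, Finset.card_sdiff_of_subset (Finset.subset_univ _), Finset.card_univ, Fintype.card_fin]
        omega

/-- The matrix `M I - X Q` over `ℤ[X]`: its `(i,j)` entry is `M δ_{ij} - Q_{ij} X`. -/
noncomputable def stochCharMatrix (n M : ℕ) (Q : Matrix (Fin n) (Fin n) ℕ) :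
    Matrix (Fin n) (Fin n) (Polynomial ℤ) :=
  Matrix.of fun i j =>
    (if i = j then (M : Polynomial ℤ) else 0) - Polynomial.C (Q i j : ℤ) * Polynomial.X

theorem stmt_4 (n M : ℕ) (hn : 0 < n) (hM : 0 < M)
    (Q : Matrix (Fin n) (Fin n) ℕ) (hQ : ∀ i, ∑ j, Q i j = M) :
    (stochCharMatrix n M Q).det.natDegree ≤ n ∧
      ∀ k ≤ n, |(stochCharMatrix n M Q).det.coeff k| ≤ (n.choose k : ℤ) * (M : ℤ) ^ n := by
  classical
  have hentry : ∀ i j, (stochCharMatrix n M Q)ᵀ j i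
      = C (if i = j then (M:ℤ) else 0) + C (-(Q i j : ℤ)) * X := by
    intro i j
    simp only [Matrix.transpose_apply, stochCharMatrix, Matrix.of_apply]
    have hM : (M : ℤ[X]) = C (M:ℤ) := (map_natCast C M).symm
    split_ifs with h
    · rw [hM, map_neg, neg_mul, sub_eq_add_neg]
    · rw [map_zero, zero_add, map_neg, neg_mul, zero_sub]
  have hdet : (stochCharMatrix n M Q).det
      = ∑ σ : Equiv.Perm (Fin n), C (Equiv.Perm.sign σ : ℤ)
          * ∏ i, (C (if i = σ i then (M:ℤ) else 0) + C (-(Q i (σ i) : ℤ)) * X) := by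
    rw [← Matrix.det_transpose, Matrix.det_apply']
    refine Finset.sum_congr rfl fun σ _ => ?_
    refine congrArg₂ (· * ·) ?_ (Finset.prod_congr rfl fun i _ => hentry i (σ i))
    exact (Polynomial.C_eq_intCast _).symm
  constructor
  · rw [hdet]
    refine Polynomial.natDegree_sum_le_of_forall_le _ _ fun σ _ => ?_
    refine (Polynomial.natDegree_mul_le).trans ?_
    rw [Polynomial.natDegree_C, zero_add]
    refine (Polynomial.natDegree_prod_le _ _).trans ?_
    have h1 : ∀ i : Fin n,
        (C (if i = σ i then (M:ℤ) else 0) + C (-(Q i (σ i) : ℤ)) * X).natDegree ≤ 1 := by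
      intro i
      refine (Polynomial.natDegree_add_le _ _).trans (max_le (by split_ifs <;> simp) ?_)
      exact (Polynomial.natDegree_mul_le).trans (by simp)
    exact le_trans (Finset.sum_le_sum (g := fun _ => 1) fun i _ => h1 i) (by simp)
  · intro k hk
    rw [hdet, Polynomial.finset_sum_coeff]
    have step1 : ∀ σ : Equiv.Perm (Fin n),
        |(C (Equiv.Perm.sign σ : ℤ)
          * ∏ i, (C (if i = σ i then (M:ℤ) else 0) + C (-(Q i (σ i) : ℤ)) * X)).coeff k|
        ≤ ∑ t ∈ (univ : Finset (Fin n)).powersetCard k,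
            (∏ i ∈ t, (Q i (σ i) : ℤ)) * ∏ i ∈ univ \ t, (if i = σ i then (M:ℤ) else 0) := by
      intro σ
      rw [Polynomial.coeff_C_mul, abs_mul]
      have hs : |((Equiv.Perm.sign σ : ℤˣ) : ℤ)| = 1 := by
        rcases Int.units_eq_one_or (Equiv.Perm.sign σ) with h | h <;> rw [h] <;> simp
      rw [hs, one_mul, coeff_prod_linear]
      refine (Finset.abs_sum_le_sum_abs _ _).trans (Finset.sum_le_sum fun t ht => ?_)
      rw [abs_mul, Finset.abs_prod, Finset.abs_prod]
      refine mul_le_mul ?_ ?_ (Finset.prod_nonneg fun i _ => abs_nonneg _) ?_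
      · exact le_of_eq (Finset.prod_congr rfl fun i _ => by rw [abs_neg, Int.abs_natCast])
      · refine Finset.prod_le_prod (fun i _ => abs_nonneg _) fun i _ => le_of_eq ?_
        split_ifs <;> simp
      · exact Finset.prod_nonneg fun i _ => by positivity
    calc |∑ σ : Equiv.Perm (Fin n), (C (Equiv.Perm.sign σ : ℤ)
            * ∏ i, (C (if i = σ i then (M:ℤ) else 0) + C (-(Q i (σ i) : ℤ)) * X)).coeff k|
        ≤ ∑ σ : Equiv.Perm (Fin n), |(C (Equiv.Perm.sign σ : ℤ)
            * ∏ i, (C (if i = σ i then (M:ℤ) else 0)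
              + C (-(Q i (σ i) : ℤ)) * X)).coeff k| := Finset.abs_sum_le_sum_abs _ _
      _ ≤ ∑ σ : Equiv.Perm (Fin n), ∑ t ∈ (univ : Finset (Fin n)).powersetCard k,
            (∏ i ∈ t, (Q i (σ i) : ℤ)) * ∏ i ∈ univ \ t, (if i = σ i then (M:ℤ) else 0) :=
          Finset.sum_le_sum fun σ _ => step1 σ
      _ = ∑ t ∈ (univ : Finset (Fin n)).powersetCard k, ∑ σ : Equiv.Perm (Fin n),
            (∏ i ∈ t, (Q i (σ i) : ℤ)) * ∏ i ∈ univ \ t, (if i = σ i then (M:ℤ) else 0) :=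
          Finset.sum_comm
      _ ≤ ∑ _t ∈ (univ : Finset (Fin n)).powersetCard k, (M:ℤ)^n :=
          Finset.sum_le_sum fun t _ => key_perm_sum n M Q hQ t
      _ = (n.choose k : ℤ) * (M:ℤ)^n := by
          rw [Finset.sum_const, Finset.card_powersetCard, Finset.card_univ, Fintype.card_fin,
            nsmul_eq_mul]
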